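/- Let M(ξ) be the deformed ASEP transition matrix on (ℂ^2)^{⊗N} and let U_GC be the diagonal matrix defined as the tensor product of diag(1, (δ/β)(q/p)^{N-i}) over sites i = 1,…,N. Then M(ξ') = U_GC M(ξ)^T U_GC^{-1}, where ξ' = (γδ/(αβ))(q/p)^{N-1} ξ^{-1}. Consequently M(ξ) and M(ξ') have the same spectrum. -/

import Mathlib

open Matrix Finset

/-- Embed a one-site (2×2) matrix at site `i` of the lattice `(ℂ²)^{⊗N}`. -/
noncomputable def siteOp {N : ℕ} (A : Matrix (Fin 2) (Fin 2) ℂ) (i : Fin N) :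
    Matrix (Fin N → Fin 2) (Fin N → Fin 2) ℂ :=
  fun τ τ' => A (τ i) (τ' i) * (if ∀ j, j ≠ i → τ j = τ' j then 1 else 0)

/-- Embed a two-site (4×4) matrix at sites `i, i'` of the lattice `(ℂ²)^{⊗N}`. -/
noncomputable def siteOp2 {N : ℕ} (A : Matrix (Fin 2 × Fin 2) (Fin 2 × Fin 2) ℂ)
    (i i' : Fin N) : Matrix (Fin N → Fin 2) (Fin N → Fin 2) ℂ :=
  fun τ τ' => A (τ i, τ i') (τ' i, τ' i')
    * (if ∀ j, j ≠ i → j ≠ i' → τ j = τ' j then 1 else 0)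

/-- Left boundary matrix `√(αγ) B(ξ) = [[-α, ξ⁻¹γ], [ξα, -γ]]`. -/
noncomputable def Bleft (α γ ξ : ℂ) : Matrix (Fin 2) (Fin 2) ℂ :=
  !![-α, ξ⁻¹ * γ; ξ * α, -γ]

/-- Right boundary matrix `√(βδ) B̄ = [[-δ, β], [δ, -β]]`. -/
noncomputable def Bright (β δ : ℂ) : Matrix (Fin 2) (Fin 2) ℂ :=
  !![-δ, β; δ, -β]

/-- Bulk hopping matrix `√(pq) w` on ℂ² ⊗ ℂ² (product basis): nonzero entries
`(01,01) = -q`, `(01,10) = p`, `(10,01) = q`, `(10,10) = -p`. -/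
noncomputable def wBulk (p q : ℂ) : Matrix (Fin 2 × Fin 2) (Fin 2 × Fin 2) ℂ :=
  Matrix.single (0, 1) (0, 1) (-q) + Matrix.single (0, 1) (1, 0) p
    + Matrix.single (1, 0) (0, 1) q + Matrix.single (1, 0) (1, 0) (-p)

/-- The deformed ASEP transition matrix `M(ξ)` on a lattice of `N = n+1` sites:
`M(ξ) = √(αγ) B₁(ξ) + Σ_{i=1}^{N-1} √(pq) w_{i,i+1} + √(βδ) B̄_N`. -/
noncomputable def Masep (n : ℕ) (p q α β γ δ ξ : ℂ) :
    Matrix (Fin (n + 1) → Fin 2) (Fin (n + 1) → Fin 2) ℂ :=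
  siteOp (Bleft α γ ξ) 0 + (∑ i : Fin n, siteOp2 (wBulk p q) i.castSucc i.succ)
    + siteOp (Bright β δ) (Fin.last n)

/-- The Gallavotti–Cohen conjugation matrix
`U_GC = ⊗_{i=1}^N diag(1, (δ/β)(q/p)^{N-i})`. -/
noncomputable def Ugc (n : ℕ) (p q β δ : ℂ) :
    Matrix (Fin (n + 1) → Fin 2) (Fin (n + 1) → Fin 2) ℂ :=
  Matrix.diagonal fun τ =>
    ∏ i : Fin (n + 1), if τ i = 1 then (δ / β) * (q / p) ^ (n - (i : ℕ)) else 1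

/-- One-site weight function for the Gallavotti–Cohen conjugation. -/
noncomputable def gGC (n : ℕ) (p q β δ : ℂ) (i : Fin (n + 1)) (x : Fin 2) : ℂ :=
  if x = 1 then (δ / β) * (q / p) ^ (n - (i : ℕ)) else 1

lemma site_conj {N : ℕ} (g : Fin N → Fin 2 → ℂ) (A A' : Matrix (Fin 2) (Fin 2) ℂ)
    (i : Fin N) (h : ∀ a b, A' a b * g i b = g i a * A b a) (τ τ' : Fin N → Fin 2) :
    siteOp A' i τ τ' * ∏ j, g j (τ' j) = (∏ j, g j (τ j)) * siteOp A i τ' τ := by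
  unfold siteOp
  by_cases hc : ∀ j, j ≠ i → τ j = τ' j
  · have hc' : ∀ j, j ≠ i → τ' j = τ j := fun j hj => (hc j hj).symm
    rw [if_pos hc, if_pos hc']
    have e1 : (∏ j, g j (τ j)) = g i (τ i) * ∏ j ∈ univ.erase i, g j (τ' j) := by
      rw [← Finset.mul_prod_erase univ _ (mem_univ i)]
      exact congrArg _ (Finset.prod_congr rfl fun j hj => by
        rw [hc j (Finset.mem_erase.mp hj).1])
    have e2 : (∏ j, g j (τ' j)) = g i (τ' i) * ∏ j ∈ univ.erase i, g j (τ' j) :=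
      (Finset.mul_prod_erase univ _ (mem_univ i)).symm
    rw [e1, e2]
    linear_combination (∏ j ∈ univ.erase i, g j (τ' j)) * h (τ i) (τ' i)
  · have hc' : ¬ ∀ j, j ≠ i → τ' j = τ j := fun h' => hc fun j hj => (h' j hj).symm
    rw [if_neg hc, if_neg hc']
    ring

lemma site2_conj {N : ℕ} (g : Fin N → Fin 2 → ℂ)
    (A A' : Matrix (Fin 2 × Fin 2) (Fin 2 × Fin 2) ℂ) (i i' : Fin N) (hii : i' ≠ i)
    (h : ∀ a b a' b', A' (a, b) (a', b') * (g i a' * g i' b')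
      = (g i a * g i' b) * A (a', b') (a, b)) (τ τ' : Fin N → Fin 2) :
    siteOp2 A' i i' τ τ' * ∏ j, g j (τ' j)
      = (∏ j, g j (τ j)) * siteOp2 A i i' τ' τ := by
  unfold siteOp2
  by_cases hc : ∀ j, j ≠ i → j ≠ i' → τ j = τ' j
  · have hc' : ∀ j, j ≠ i → j ≠ i' → τ' j = τ j := fun j hj hj' => (hc j hj hj').symm
    rw [if_pos hc, if_pos hc']
    have hmem : i' ∈ univ.erase i := Finset.mem_erase.mpr ⟨hii, mem_univ i'⟩
    have e1 : (∏ j, g j (τ j))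
        = g i (τ i) * (g i' (τ i') * ∏ j ∈ (univ.erase i).erase i', g j (τ' j)) := by
      rw [← Finset.mul_prod_erase univ _ (mem_univ i),
        ← Finset.mul_prod_erase _ _ hmem]
      refine congrArg _ (congrArg _ (Finset.prod_congr rfl fun j hj => ?_))
      have := Finset.mem_erase.mp hj
      rw [hc j (Finset.mem_erase.mp this.2).1 this.1]
    have e2 : (∏ j, g j (τ' j))
        = g i (τ' i) * (g i' (τ' i') * ∏ j ∈ (univ.erase i).erase i', g j (τ' j)) := by
      rw [← Finset.mul_prod_erase univ _ (mem_univ i),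
        ← Finset.mul_prod_erase _ _ hmem]
    rw [e1, e2]
    linear_combination (∏ j ∈ (univ.erase i).erase i', g j (τ' j))
      * h (τ i) (τ i') (τ' i) (τ' i')
  · have hc' : ¬ ∀ j, j ≠ i → j ≠ i' → τ' j = τ j :=
      fun h' => hc fun j hj hj' => (h' j hj hj').symm
    rw [if_neg hc, if_neg hc']
    ring

lemma hLcheck (n : ℕ) (p q α β γ δ ξ : ℂ)
    (hp : p ≠ 0) (hq : q ≠ 0) (hα : α ≠ 0) (hβ : β ≠ 0) (hγ : γ ≠ 0) (hδ : δ ≠ 0)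
    (hξ : ξ ≠ 0) : ∀ a b,
    Bleft α γ (γ * δ / (α * β) * (q / p) ^ n * ξ⁻¹) a b * gGC n p q β δ 0 b
      = gGC n p q β δ 0 a * Bleft α γ ξ b a := by
  have hqp : (q / p) ^ n ≠ 0 := pow_ne_zero _ (div_ne_zero hq hp)
  intro a b
  fin_cases a <;> fin_cases b <;>
    simp [Bleft, gGC] <;> field_simp <;> ring

lemma hRcheck (n : ℕ) (p q β δ : ℂ) (hβ : β ≠ 0) (hδ : δ ≠ 0) : ∀ a b,
    Bright β δ a b * gGC n p q β δ (Fin.last n) b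
      = gGC n p q β δ (Fin.last n) a * Bright β δ b a := by
  intro a b
  fin_cases a <;> fin_cases b <;>
    simp [Bright, gGC, Fin.last] <;> field_simp

lemma hWcheck (n : ℕ) (p q β δ : ℂ) (hp : p ≠ 0) (hq : q ≠ 0)
    (hβ : β ≠ 0) (hδ : δ ≠ 0) (i0 : Fin n) : ∀ a b a' b',
    wBulk p q (a, b) (a', b')
        * (gGC n p q β δ i0.castSucc a' * gGC n p q β δ i0.succ b')
      = (gGC n p q β δ i0.castSucc a * gGC n p q β δ i0.succ b)
        * wBulk p q (a', b') (a, b) := by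
  have hk : n - (i0 : ℕ) = (n - ((i0 : ℕ) + 1)) + 1 := by omega
  intro a b a' b'
  simp only [gGC, Fin.coe_castSucc, Fin.val_succ, hk, pow_succ]
  fin_cases a <;> fin_cases b <;> fin_cases a' <;> fin_cases b' <;>
    simp only [wBulk, Matrix.add_apply, Matrix.single, Matrix.of_apply,
      Prod.mk.injEq] <;>
    norm_num <;> field_simp <;> ring

/-- The spectrum of a matrix is invariant under transposition. -/
lemma spectrum_transpose {m : Type*} [Fintype m] [DecidableEq m]
    (M : Matrix m m ℂ) : spectrum ℂ Mᵀ = spectrum ℂ M := by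
  ext μ
  rw [spectrum.mem_iff, spectrum.mem_iff, not_iff_not,
    Matrix.isUnit_iff_isUnit_det, Matrix.isUnit_iff_isUnit_det]
  have : algebraMap ℂ (Matrix m m ℂ) μ - Mᵀ = (algebraMap ℂ (Matrix m m ℂ) μ - M)ᵀ := by
    rw [Matrix.transpose_sub, Matrix.algebraMap_eq_diagonal, Matrix.diagonal_transpose]
  rw [this, Matrix.det_transpose]

/-- Gallavotti–Cohen symmetry: `M(ξ') = U_GC M(ξ)ᵀ U_GC⁻¹` with
`ξ' = (γδ/(αβ))(q/p)^{N-1} ξ⁻¹`; consequently `M(ξ)` and `M(ξ')` have the same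
spectrum. -/
theorem stmt7 (n : ℕ) (p q α β γ δ ξ : ℂ)
    (hp : p ≠ 0) (hq : q ≠ 0) (hα : α ≠ 0) (hβ : β ≠ 0) (hγ : γ ≠ 0) (hδ : δ ≠ 0)
    (hξ : ξ ≠ 0) :
    Masep n p q α β γ δ (γ * δ / (α * β) * (q / p) ^ n * ξ⁻¹)
        = Ugc n p q β δ * (Masep n p q α β γ δ ξ)ᵀ * (Ugc n p q β δ)⁻¹
      ∧ spectrum ℂ (Masep n p q α β γ δ (γ * δ / (α * β) * (q / p) ^ n * ξ⁻¹))
        = spectrum ℂ (Masep n p q α β γ δ ξ) := by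
  set d : (Fin (n + 1) → Fin 2) → ℂ := fun τ => ∏ i, gGC n p q β δ i (τ i) with hd
  have hUgc : Ugc n p q β δ = Matrix.diagonal d := rfl
  have hdet : IsUnit (Ugc n p q β δ).det := by
    rw [hUgc, Matrix.det_diagonal, isUnit_iff_ne_zero]
    refine Finset.prod_ne_zero_iff.mpr fun τ _ => Finset.prod_ne_zero_iff.mpr fun i _ => ?_
    unfold gGC
    split
    · exact mul_ne_zero (div_ne_zero hδ hβ) (pow_ne_zero _ (div_ne_zero hq hp))
    · exact one_ne_zero
  have key : Masep n p q α β γ δ (γ * δ / (α * β) * (q / p) ^ n * ξ⁻¹) * Ugc n p q β δ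
      = Ugc n p q β δ * (Masep n p q α β γ δ ξ)ᵀ := by
    ext τ τ'
    rw [hUgc, Matrix.mul_diagonal, Matrix.diagonal_mul, Matrix.transpose_apply]
    show Masep n p q α β γ δ _ τ τ' * d τ' = d τ * Masep n p q α β γ δ ξ τ' τ
    unfold Masep
    simp only [Matrix.add_apply, Matrix.sum_apply]
    rw [add_mul, add_mul, Finset.sum_mul, mul_add, mul_add, Finset.mul_sum]
    congr 1
    · congr 1
      · exact site_conj (gGC n p q β δ) _ _ 0
          (hLcheck n p q α β γ δ ξ hp hq hα hβ hγ hδ hξ) τ τ'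
      · exact Finset.sum_congr rfl fun i0 _ =>
          site2_conj (gGC n p q β δ) _ _ i0.castSucc i0.succ
            (Fin.castSucc_lt_succ (i := i0)).ne'
            (hWcheck n p q β δ hp hq hβ hδ i0) τ τ'
    · exact site_conj (gGC n p q β δ) _ _ (Fin.last n) (hRcheck n p q β δ hβ hδ) τ τ'
  have h1 : Masep n p q α β γ δ (γ * δ / (α * β) * (q / p) ^ n * ξ⁻¹)
      = Ugc n p q β δ * (Masep n p q α β γ δ ξ)ᵀ * (Ugc n p q β δ)⁻¹ := by
    rw [← key, Matrix.mul_assoc, Matrix.mul_nonsing_inv _ hdet, Matrix.mul_one]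
  refine ⟨h1, ?_⟩
  rw [h1]
  have hspec : spectrum ℂ
      (Ugc n p q β δ * (Masep n p q α β γ δ ξ)ᵀ * (Ugc n p q β δ)⁻¹)
      = spectrum ℂ (Masep n p q α β γ δ ξ)ᵀ := by
    let u : (Matrix (Fin (n + 1) → Fin 2) (Fin (n + 1) → Fin 2) ℂ)ˣ :=
      Matrix.nonsingInvUnit _ hdet
    have : Ugc n p q β δ * (Masep n p q α β γ δ ξ)ᵀ * (Ugc n p q β δ)⁻¹
        = (u : Matrix (Fin (n + 1) → Fin 2) (Fin (n + 1) → Fin 2) ℂ)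
          * (Masep n p q α β γ δ ξ)ᵀ
          * ((u⁻¹ : (Matrix (Fin (n + 1) → Fin 2) (Fin (n + 1) → Fin 2) ℂ)ˣ)
            : Matrix (Fin (n + 1) → Fin 2) (Fin (n + 1) → Fin 2) ℂ) := rfl
    rw [this, spectrum.units_conjugate]
  rw [hspec, spectrum_transpose]
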